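/- Let b > 0 be real. Assume θ(x) < x for all 0 < x ≤ e^b, assume there exists ε > 0 with |ψ(x) − x| ≤ ε·x for all x ≥ e^b, and assume ψ(x) ≤ 1.03883·x for all x > 0. Then θ(x) ≤ (1 + ε)·x for all x > 0, and ( 1 − ε − 1.03883·(e^{−b/2} + e^{−2b/3} + e^{−4b/5}) )·x ≤ θ(x) for all x ≥ e^b. -/

import Mathlib

/-- Chebyshev theta function: `θ(x) = ∑_{p ≤ x, p prime} log p`. -/
noncomputable def chebTheta (x : ℝ) : ℝ :=
  ∑ p ∈ (Finset.range (⌊x⌋₊ + 1)).filter Nat.Prime, Real.log p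

/-- Chebyshev psi function: `ψ(x) = ∑_{n ≤ x} Λ(n)`. -/
noncomputable def chebPsi (x : ℝ) : ℝ :=
  ∑ n ∈ Finset.range (⌊x⌋₊ + 1), ArithmeticFunction.vonMangoldt n

open Finset ArithmeticFunction

lemma psi_eq (N : ℕ) :
    (∑ n ∈ Finset.range (N+1), Λ n)
      = ∑ p ∈ (Finset.range (N+1)).filter Nat.Prime,
          (Nat.log p N : ℝ) * Real.log p := by
  have h1 : (∑ n ∈ Finset.range (N+1), Λ n)
      = ∑ n ∈ (Finset.range (N+1)).filter IsPrimePow, Λ n := by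
    rw [Finset.sum_filter_of_ne]
    intro n _ hn
    exact vonMangoldt_ne_zero_iff.mp hn
  have h2 : ∀ p ∈ (Finset.range (N+1)).filter Nat.Prime,
      (Nat.log p N : ℝ) * Real.log p
        = ∑ k ∈ Finset.Icc 1 (Nat.log p N), Real.log p := by
    intro p _
    rw [Finset.sum_const, Nat.card_Icc]
    simp [nsmul_eq_mul]
  rw [h1, Finset.sum_congr rfl h2, Finset.sum_sigma']
  refine (Finset.sum_bij (fun a _ => a.1 ^ a.2) ?_ ?_ ?_ ?_).symm
  · rintro ⟨p, k⟩ ha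
    simp only [Finset.mem_sigma, Finset.mem_filter, Finset.mem_range, Finset.mem_Icc] at ha
    obtain ⟨⟨hpN, hp⟩, hk1, hk2⟩ := ha
    simp only [Finset.mem_filter, Finset.mem_range]
    refine ⟨Nat.lt_succ_of_le (Nat.pow_le_of_le_log ?_ hk2), hp.isPrimePow.pow (by omega)⟩
    -- need N ≠ 0
    intro h0
    subst h0
    have := hp.two_le
    omega
  · rintro ⟨p, k⟩ ha ⟨q, j⟩ hb h
    simp only [Finset.mem_sigma, Finset.mem_filter, Finset.mem_range, Finset.mem_Icc] at ha hb
    obtain ⟨⟨_, hp⟩, hk1, _⟩ := ha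
    obtain ⟨⟨_, hq⟩, hj1, _⟩ := hb
    dsimp at h
    have hpq : p = q := by
      have := congrArg Nat.minFac h
      rwa [hp.pow_minFac (by omega), hq.pow_minFac (by omega)] at this
    subst hpq
    have : k = j := Nat.pow_right_injective hp.two_le h
    simp [this]
  · intro n hn
    simp only [Finset.mem_filter, Finset.mem_range] at hn
    obtain ⟨hnN, hpp⟩ := hn
    obtain ⟨p, k, hp, hk, rfl⟩ := hpp
    have hp' : p.Prime := Nat.prime_iff.mpr hp
    have hN0 : N ≠ 0 := by
      intro h0; subst h0
      interval_cases h : p ^ k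
      · exact absurd h (pow_ne_zero _ hp'.pos.ne')
    have hpk : p ^ k ≤ N := Nat.lt_succ_iff.mp hnN
    refine ⟨⟨p, k⟩, ?_, rfl⟩
    simp only [Finset.mem_sigma, Finset.mem_filter, Finset.mem_range, Finset.mem_Icc]
    refine ⟨⟨Nat.lt_succ_of_le (le_trans (Nat.le_self_pow (by omega) p) hpk), hp'⟩, hk,
      (Nat.le_log_iff_pow_le hp'.one_lt hN0).mpr hpk⟩
  · rintro ⟨p, k⟩ ha
    simp only [Finset.mem_sigma, Finset.mem_filter, Finset.mem_range, Finset.mem_Icc] at ha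
    obtain ⟨⟨_, hp⟩, hk1, _⟩ := ha
    dsimp
    rw [vonMangoldt_apply_pow (by omega), vonMangoldt_apply_prime hp]

lemma theta_le_psi (x : ℝ) : chebTheta x ≤ chebPsi x := by
  unfold chebTheta chebPsi
  rw [Finset.sum_congr rfl
    (fun p hp => (vonMangoldt_apply_prime (Finset.mem_filter.mp hp).2).symm)]
  exact Finset.sum_le_sum_of_subset_of_nonneg (Finset.filter_subset _ _)
    (fun n _ _ => vonMangoldt_nonneg)

lemma theta_nonneg (x : ℝ) : 0 ≤ chebTheta x := by
  apply Finset.sum_nonneg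
  intro p hp
  exact Real.log_nonneg
    (by exact_mod_cast (Finset.mem_filter.mp hp).2.one_lt.le)

lemma psi_rpow_ge (x : ℝ) (hx : 1 ≤ x) (m : ℕ) (hm : 2 ≤ m) :
    ∑ p ∈ (Finset.range (⌊x⌋₊+1)).filter Nat.Prime,
        ((Nat.log p ⌊x⌋₊ / m : ℕ) : ℝ) * Real.log p
      ≤ chebPsi (x ^ ((m:ℝ)⁻¹)) := by
  have hx0 : (0:ℝ) < x := lt_of_lt_of_le one_pos hx
  set N := ⌊x⌋₊ with hNdef
  set y := x ^ ((m:ℝ)⁻¹) with hy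
  have hN1 : 1 ≤ N := Nat.le_floor (by exact_mod_cast hx)
  have hy1 : (1:ℝ) ≤ y := Real.one_le_rpow hx (by positivity)
  set M := ⌊y⌋₊ with hM
  have hM1 : 1 ≤ M := Nat.le_floor (by exact_mod_cast hy1)
  have hMN : M ≤ N := by
    apply Nat.floor_le_floor
    calc y ≤ x ^ (1:ℝ) := Real.rpow_le_rpow_of_exponent_le hx (by
      rw [inv_le_one_iff₀]; right; exact_mod_cast le_trans one_le_two hm)
    _ = x := Real.rpow_one x
  have hpoint : ∀ p ∈ (Finset.range (N+1)).filter Nat.Prime,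
      ((Nat.log p N / m : ℕ) : ℝ) * Real.log p ≤ (Nat.log p M : ℝ) * Real.log p := by
    intro p hp
    simp only [Finset.mem_filter, Finset.mem_range] at hp
    obtain ⟨hpN, hp⟩ := hp
    have hlogp : (0:ℝ) ≤ Real.log p :=
      Real.log_nonneg (by exact_mod_cast hp.one_lt.le)
    refine mul_le_mul_of_nonneg_right ?_ hlogp
    have hdiv : Nat.log p N / m ≤ Nat.log p M := by
      set q := Nat.log p N / m with hqdef
      by_cases hq : q = 0
      · simp [hq]
      have h1 : p ^ (q * m) ≤ N :=
        le_trans (Nat.pow_le_pow_right hp.pos (Nat.div_mul_le_self _ _))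
          (Nat.pow_log_le_self p (by omega))
      have h2 : ((p ^ q : ℕ) : ℝ) ^ (m : ℕ) ≤ x := by
        push_cast
        rw [← pow_mul]
        calc ((p:ℝ)) ^ (q * m) = ((p ^ (q * m) : ℕ) : ℝ) := by push_cast; ring
          _ ≤ (N:ℝ) := by exact_mod_cast h1
          _ ≤ x := Nat.floor_le hx0.le
      have hm0 : (m:ℝ) ≠ 0 := by positivity
      have h3 : ((p ^ q : ℕ) : ℝ) ≤ y := by
        have := Real.rpow_le_rpow (by positivity) h2 (by positivity : (0:ℝ) ≤ (m:ℝ)⁻¹)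
        rwa [← Real.rpow_natCast ((p ^ q : ℕ) : ℝ) m, ← Real.rpow_mul (by positivity),
          mul_inv_cancel₀ hm0, Real.rpow_one] at this
      have h4 : p ^ q ≤ M := Nat.le_floor h3
      have hM0 : M ≠ 0 := by omega
      exact (Nat.le_log_iff_pow_le hp.one_lt hM0).mpr h4
    exact_mod_cast hdiv
  calc ∑ p ∈ (Finset.range (N+1)).filter Nat.Prime,
        ((Nat.log p N / m : ℕ) : ℝ) * Real.log p
      ≤ ∑ p ∈ (Finset.range (N+1)).filter Nat.Prime,
        (Nat.log p M : ℝ) * Real.log p := Finset.sum_le_sum hpoint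
    _ = ∑ p ∈ (Finset.range (M+1)).filter Nat.Prime,
        (Nat.log p M : ℝ) * Real.log p := by
        refine (Finset.sum_subset
          (Finset.filter_subset_filter _ (Finset.range_subset_range.mpr (by omega))) ?_).symm
        intro p hp hpn
        simp only [Finset.mem_filter, Finset.mem_range] at hp hpn
        have hpM : M < p := by
          by_contra hc
          exact hpn ⟨by omega, hp.2⟩
        rw [Nat.log_of_lt hpM]
        simp
    _ = chebPsi y := (psi_eq M).symm

lemma psi_sub_theta (x : ℝ) (hx : 1 ≤ x) :
    chebPsi x ≤ chebTheta x + chebPsi (x ^ ((2:ℝ)⁻¹)) + chebPsi (x ^ ((3:ℝ)⁻¹))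
      + chebPsi (x ^ ((5:ℝ)⁻¹)) := by
  set N := ⌊x⌋₊ with hN
  have hkey : ∀ p ∈ (Finset.range (N+1)).filter Nat.Prime,
      (Nat.log p N : ℝ) * Real.log p ≤ Real.log p
        + (((Nat.log p N / 2 : ℕ):ℝ) * Real.log p
        + (((Nat.log p N / 3 : ℕ):ℝ) * Real.log p
        + ((Nat.log p N / 5 : ℕ):ℝ) * Real.log p)) := by
    intro p hp
    simp only [Finset.mem_filter, Finset.mem_range] at hp
    have hlogp : (0:ℝ) ≤ Real.log p :=
      Real.log_nonneg (by exact_mod_cast hp.2.one_lt.le)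
    have harith : (Nat.log p N : ℝ) ≤ 1 + ((Nat.log p N / 2 : ℕ):ℝ)
        + ((Nat.log p N / 3 : ℕ):ℝ) + ((Nat.log p N / 5 : ℕ):ℝ) := by
      have : Nat.log p N ≤ 1 + Nat.log p N / 2 + Nat.log p N / 3 + Nat.log p N / 5 := by
        omega
      exact_mod_cast this
    nlinarith [harith, hlogp]
  calc chebPsi x = ∑ p ∈ (Finset.range (N+1)).filter Nat.Prime,
        (Nat.log p N : ℝ) * Real.log p := psi_eq N
    _ ≤ ∑ p ∈ (Finset.range (N+1)).filter Nat.Prime, (Real.log p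
        + (((Nat.log p N / 2 : ℕ):ℝ) * Real.log p
        + (((Nat.log p N / 3 : ℕ):ℝ) * Real.log p
        + ((Nat.log p N / 5 : ℕ):ℝ) * Real.log p))) := Finset.sum_le_sum hkey
    _ = chebTheta x
        + (∑ p ∈ (Finset.range (N+1)).filter Nat.Prime,
            ((Nat.log p N / 2 : ℕ):ℝ) * Real.log p
        + (∑ p ∈ (Finset.range (N+1)).filter Nat.Prime,
            ((Nat.log p N / 3 : ℕ):ℝ) * Real.log p
        + ∑ p ∈ (Finset.range (N+1)).filter Nat.Prime,
            ((Nat.log p N / 5 : ℕ):ℝ) * Real.log p)) := by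
        rw [Finset.sum_add_distrib, Finset.sum_add_distrib, Finset.sum_add_distrib]
        rfl
    _ ≤ chebTheta x + (chebPsi (x ^ ((2:ℝ)⁻¹)) + (chebPsi (x ^ ((3:ℝ)⁻¹))
        + chebPsi (x ^ ((5:ℝ)⁻¹)))) := by
        gcongr
        · exact psi_rpow_ge x hx 2 le_rfl
        · exact psi_rpow_ge x hx 3 (by norm_num)
        · exact psi_rpow_ge x hx 5 (by norm_num)
    _ = _ := by ring

lemma rpow_bound {b x : ℝ} (r : ℝ) (hr0 : 0 ≤ r) (hr1 : r ≤ 1)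
    (hx : Real.exp b ≤ x) : x ^ r ≤ Real.exp (-(1-r)*b) * x := by
  have hx0 : 0 < x := lt_of_lt_of_le (Real.exp_pos b) hx
  have h1 : x ^ r = x ^ (r-1) * x := by
    rw [← Real.rpow_add_one hx0.ne' (r-1)]
    norm_num
  have h2 : x ^ (r-1) ≤ (Real.exp b) ^ (r-1) :=
    Real.rpow_le_rpow_of_nonpos (Real.exp_pos b) hx (by linarith)
  have h3 : (Real.exp b) ^ (r-1) = Real.exp (-(1-r)*b) := by
    rw [← Real.exp_mul]
    congr 1
    ring
  rw [h1]
  calc x ^ (r-1) * x ≤ (Real.exp b) ^ (r-1) * x :=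
        mul_le_mul_of_nonneg_right h2 hx0.le
    _ = Real.exp (-(1-r)*b) * x := by rw [h3]

theorem statement14 (b : ℝ) (hb : b > 0)
    (hθ : ∀ x : ℝ, 0 < x → x ≤ Real.exp b → chebTheta x < x)
    (ε : ℝ) (hε : ε > 0)
    (hψ : ∀ x : ℝ, x ≥ Real.exp b → |chebPsi x - x| ≤ ε * x)
    (hψ0 : ∀ x : ℝ, x > 0 → chebPsi x ≤ 1.03883 * x) :
    (∀ x : ℝ, x > 0 → chebTheta x ≤ (1 + ε) * x) ∧
    (∀ x : ℝ, x ≥ Real.exp b →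
      (1 - ε - 1.03883 * (Real.exp (-b / 2) + Real.exp (-2 * b / 3)
        + Real.exp (-4 * b / 5))) * x ≤ chebTheta x) := by
  constructor
  · intro x hx
    rcases le_or_gt x (Real.exp b) with h | h
    · have := hθ x hx h
      nlinarith
    · have h1 := abs_le.mp (hψ x h.le)
      have h2 := theta_le_psi x
      nlinarith [h1.2]
  · intro x hx
    have hx1 : (1:ℝ) ≤ x := le_trans (Real.one_le_exp hb.le) hx
    have hx0 : (0:ℝ) < x := lt_of_lt_of_le one_pos hx1
    have hkey := psi_sub_theta x hx1
    have hy2 : (0:ℝ) < x ^ ((2:ℝ)⁻¹) := Real.rpow_pos_of_pos hx0 _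
    have hy3 : (0:ℝ) < x ^ ((3:ℝ)⁻¹) := Real.rpow_pos_of_pos hx0 _
    have hy5 : (0:ℝ) < x ^ ((5:ℝ)⁻¹) := Real.rpow_pos_of_pos hx0 _
    have hb2 : x ^ ((2:ℝ)⁻¹) ≤ Real.exp (-b/2) * x := by
      have := rpow_bound (2:ℝ)⁻¹ (by norm_num) (by norm_num) hx
      rwa [show -(1-(2:ℝ)⁻¹)*b = -b/2 by ring] at this
    have hb3 : x ^ ((3:ℝ)⁻¹) ≤ Real.exp (-2*b/3) * x := by
      have := rpow_bound (3:ℝ)⁻¹ (by norm_num) (by norm_num) hx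
      rwa [show -(1-(3:ℝ)⁻¹)*b = -2*b/3 by ring] at this
    have hb5 : x ^ ((5:ℝ)⁻¹) ≤ Real.exp (-4*b/5) * x := by
      have := rpow_bound (5:ℝ)⁻¹ (by norm_num) (by norm_num) hx
      rwa [show -(1-(5:ℝ)⁻¹)*b = -4*b/5 by ring] at this
    have hp2 := hψ0 _ hy2
    have hp3 := hψ0 _ hy3
    have hp5 := hψ0 _ hy5
    have h1 := (abs_le.mp (hψ x hx)).1
    nlinarith [hb2, hb3, hb5, hp2, hp3, hp5, h1, hkey]
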